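/- arXiv:2504.11463 — 2 statements merged into one kernel-verified Lean document; each statement's English description precedes it below -/
import Mathlib

section
/- Let N ⊆ ℝ be a Lebesgue measurable set such that there do not exist α, β, γ ∈ N with α + β = γ. Then for every x > 0, the Lebesgue measure of N ∩ [0, x] is at most x/2. -/
open MeasureTheory Set

theorem sumfree_measure_le_half (N : Set ℝ) (hN : MeasurableSet N)
    (hsf : ¬ ∃ α β γ : ℝ, α ∈ N ∧ β ∈ N ∧ γ ∈ N ∧ α + β = γ) :
    ∀ x : ℝ, 0 < x → volume (N ∩ Icc 0 x) ≤ ENNReal.ofReal (x / 2) := by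
  intro x hx
  by_contra hcon
  push_neg at hcon
  set f : ℝ → ℝ := fun t => (volume (N ∩ Icc 0 t)).toReal with hf
  have hfin : ∀ t : ℝ, volume (N ∩ Icc 0 t) ≠ ⊤ := by
    intro t
    refine ne_top_of_le_ne_top ?_ (measure_mono inter_subset_right)
    simp [Real.volume_Icc]
  have hmono : Monotone f := by
    intro s t hst
    exact ENNReal.toReal_mono (hfin t)
      (measure_mono (inter_subset_inter_right _ (Icc_subset_Icc_right hst)))
  have hstep : ∀ s t : ℝ, s ≤ t → f t ≤ f s + (t - s) := by
    intro s t hst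
    have h1 : volume (N ∩ Icc 0 t) ≤ volume (N ∩ Icc 0 s) + ENNReal.ofReal (t - s) := by
      calc volume (N ∩ Icc 0 t) ≤ volume ((N ∩ Icc 0 s) ∪ Ioc s t) := by
            refine measure_mono ?_
            rintro y ⟨hyN, hy0, hyt⟩
            by_cases hys : y ≤ s
            · exact Or.inl ⟨hyN, hy0, hys⟩
            · exact Or.inr ⟨lt_of_not_ge hys, hyt⟩
        _ ≤ volume (N ∩ Icc 0 s) + volume (Ioc s t) := measure_union_le _ _
        _ = volume (N ∩ Icc 0 s) + ENNReal.ofReal (t - s) := by rw [Real.volume_Ioc]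
    have h2 := ENNReal.toReal_mono (by
        exact ENNReal.add_ne_top.2 ⟨hfin s, ENNReal.ofReal_ne_top⟩) h1
    rw [ENNReal.toReal_add (hfin s) ENNReal.ofReal_ne_top,
      ENNReal.toReal_ofReal (sub_nonneg.2 hst)] at h2
    exact h2
  have hlip : LipschitzWith 1 f := by
    apply LipschitzWith.of_dist_le_mul
    intro s t
    rw [Real.dist_eq, Real.dist_eq, NNReal.coe_one, one_mul]
    rcases le_total s t with h | h
    · rw [abs_sub_comm (f s), abs_of_nonneg (sub_nonneg.2 (hmono h)),
        abs_sub_comm s, abs_of_nonneg (sub_nonneg.2 h)]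
      linarith [hstep s t h]
    · rw [abs_of_nonneg (sub_nonneg.2 (hmono h)), abs_of_nonneg (sub_nonneg.2 h)]
      linarith [hstep t s h]
  have hcont : Continuous f := hlip.continuous
  -- f x > x/2
  have hfx : x / 2 < f x :=
    (ENNReal.ofReal_lt_iff_lt_toReal (by linarith) (hfin x)).1 hcon
  -- the set S
  set S : Set ℝ := Icc 0 x ∩ {t | f t ≤ t / 2} with hS
  have hSclosed : IsClosed S :=
    isClosed_Icc.inter (isClosed_le hcont (continuous_id.div_const 2))
  have hf0 : f 0 = 0 := by
    have h00 : volume (N ∩ Icc (0:ℝ) 0) = 0 := by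
      refine measure_mono_null (inter_subset_right) ?_
      simp
    show (volume (N ∩ Icc (0:ℝ) 0)).toReal = 0
    rw [h00]; simp
  have h0S : (0:ℝ) ∈ S := ⟨⟨le_refl 0, hx.le⟩, by simp [hf0]⟩
  have hSbdd : BddAbove S := ⟨x, fun t ht => ht.1.2⟩
  set t₀ : ℝ := sSup S with ht₀
  have ht₀S : t₀ ∈ S := hSclosed.csSup_mem ⟨0, h0S⟩ hSbdd
  have ht₀0 : 0 ≤ t₀ := ht₀S.1.1
  have ht₀x : t₀ ≤ x := ht₀S.1.2
  have ht₀f : f t₀ ≤ t₀ / 2 := ht₀S.2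
  have ht₀lt : t₀ < x := by
    rcases lt_or_eq_of_le ht₀x with h | h
    · exact h
    · exfalso; rw [h] at ht₀f; linarith
  -- positive measure in (t₀, x]
  have hsplit : volume (N ∩ Icc 0 x) = volume (N ∩ Icc 0 t₀) + volume (N ∩ Ioc t₀ x) := by
    have hdisj : Disjoint (N ∩ Icc 0 t₀) (N ∩ Ioc t₀ x) := by
      apply Set.disjoint_left.2
      rintro a ⟨-, -, ha2⟩ ⟨-, ha3, -⟩
      exact absurd ha3 (not_lt.2 ha2)
    rw [← measure_union hdisj (hN.inter measurableSet_Ioc), ← inter_union_distrib_left,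
      Icc_union_Ioc_eq_Icc ht₀0 ht₀x]
  have hIocpos : volume (N ∩ Ioc t₀ x) ≠ 0 := by
    intro h0
    rw [h0, add_zero] at hsplit
    have : f x = f t₀ := by rw [hf]; simp only; rw [hsplit]
    linarith
  obtain ⟨γ, hγN, hγt₀, hγx⟩ : ∃ γ, γ ∈ N ∧ t₀ < γ ∧ γ ≤ x := by
    rcases nonempty_of_measure_ne_zero hIocpos with ⟨γ, hγ1, hγ2, hγ3⟩
    exact ⟨γ, hγ1, hγ2, hγ3⟩
  have hγ0 : 0 ≤ γ := le_trans ht₀0 hγt₀.le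
  -- γ ∉ S so f γ > γ/2
  have hγS : γ ∉ S := fun h => absurd (le_csSup hSbdd h) (not_le.2 hγt₀)
  have hγf : γ / 2 < f γ := by
    by_contra h
    exact hγS ⟨⟨hγ0, hγx⟩, not_lt.1 h⟩
  have hγvol : ENNReal.ofReal (γ / 2) < volume (N ∩ Icc 0 γ) :=
    (ENNReal.ofReal_lt_iff_lt_toReal (by linarith) (hfin γ)).2 hγf
  -- reflection
  set B : Set ℝ := N ∩ Icc 0 γ with hB
  set C : Set ℝ := (fun b => γ - b) ⁻¹' B with hC
  have hBmeas : MeasurableSet B := hN.inter measurableSet_Icc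
  have hCmeas : MeasurableSet C := (measurable_const.sub measurable_id) hBmeas
  have hCvol : volume C = volume B :=
    (Measure.measurePreserving_sub_left volume γ).measure_preimage hBmeas.nullMeasurableSet
  have hCsub : C ⊆ Icc 0 γ := by
    rintro b hb
    have h1 : γ - b ∈ Icc 0 γ := hb.2
    simp only [mem_Icc] at h1 ⊢
    constructor <;> linarith [h1.1, h1.2]
  have hBsub : B ⊆ Icc 0 γ := inter_subset_right
  -- B ∩ C nonempty
  have hBC : (B ∩ C).Nonempty := by
    rcases eq_empty_or_nonempty (B ∩ C) with h | h
    · exfalso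
      have hkey := measure_union_add_inter (μ := volume) B hCmeas
      rw [h, measure_empty, add_zero] at hkey
      have hle : volume (B ∪ C) ≤ ENNReal.ofReal γ := by
        refine le_trans (measure_mono (union_subset hBsub hCsub)) ?_
        simp [Real.volume_Icc]
      have hgt : ENNReal.ofReal γ < volume B + volume C := by
        rw [hCvol]
        calc ENNReal.ofReal γ = ENNReal.ofReal (γ / 2) + ENNReal.ofReal (γ / 2) := by
              rw [← ENNReal.ofReal_add (by linarith) (by linarith)]
              ring_nf
          _ < volume B + volume B := by
              exact ENNReal.add_lt_add hγvol hγvol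
      rw [hkey] at hle
      exact absurd hle (not_le.2 hgt)
    · exact h
  obtain ⟨α, hαB, hαC⟩ := hBC
  exact hsf ⟨α, γ - α, γ, hαB.1, hαC.1, hγN, by ring⟩
end

section
/- Let N ⊆ ℝ be a Lebesgue measurable set and α > 0 a real number such that the Lebesgue measure of N ∩ [0, α] is strictly greater than α/2. Then there exists a real number β with 0 < β < α such that both β ∈ N and α - β ∈ N. -/
open MeasureTheory Set

theorem exists_sum_decomposition (N : Set ℝ) (hN : MeasurableSet N) (α : ℝ) (hα : 0 < α)
    (h : ENNReal.ofReal (α / 2) < volume (N ∩ Icc 0 α)) :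
    ∃ β : ℝ, 0 < β ∧ β < α ∧ β ∈ N ∧ α - β ∈ N := by
  set A : Set ℝ := N ∩ Icc 0 α with hA
  set B : Set ℝ := (fun x => α - x) ⁻¹' A with hB
  have hAm : MeasurableSet A := hN.inter measurableSet_Icc
  have hBm : MeasurableSet B := hAm.preimage (measurable_const.sub measurable_id)
  have hvolB : volume B = volume A := by
    have : B = Neg.neg ⁻¹' ((fun x : ℝ => α + x) ⁻¹' A) := by
      ext x; simp [hB, sub_eq_add_neg]
    rw [this, Measure.measure_preimage_neg, measure_preimage_add]
  have hsub : A ∪ B ⊆ Icc 0 α := by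
    rintro x (hx | hx)
    · exact hx.2
    · have : α - x ∈ Icc 0 α := hx.2
      constructor <;> [linarith [this.2]; linarith [this.1]]
  have hUnion : volume (A ∪ B) ≤ ENNReal.ofReal α := by
    calc volume (A ∪ B) ≤ volume (Icc 0 α) := measure_mono hsub
    _ = ENNReal.ofReal α := by rw [Real.volume_Icc]; ring_nf
  have hkey : 0 < volume (A ∩ B) := by
    by_contra hc
    push_neg at hc
    have h0 : volume (A ∩ B) = 0 := le_antisymm hc bot_le
    have := measure_union_add_inter (μ := volume) A hBm
    rw [h0, add_zero, hvolB] at this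
    have h2 : ENNReal.ofReal α < volume A + volume A := by
      calc ENNReal.ofReal α = ENNReal.ofReal (α / 2) + ENNReal.ofReal (α / 2) := by
            rw [← ENNReal.ofReal_add (by linarith) (by linarith)]; ring_nf
      _ < volume A + volume A := ENNReal.add_lt_add h h
    rw [← this] at h2
    exact absurd hUnion (not_le.mpr h2)
  have hpos : 0 < volume ((A ∩ B) \ {0, α}) := by
    have : volume ((A ∩ B) \ {0, α}) = volume (A ∩ B) := by
      apply measure_diff_null
      exact measure_union_null Real.volume_singleton Real.volume_singleton
    rwa [this]
  obtain ⟨β, hβ⟩ := nonempty_of_measure_ne_zero hpos.ne'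
  obtain ⟨⟨hβA, hβB⟩, hβne⟩ := hβ
  simp only [mem_insert_iff, mem_singleton_iff, not_or] at hβne
  have h1 : β ∈ Icc 0 α := hβA.2
  have h2 : α - β ∈ A := hβB
  exact ⟨β, lt_of_le_of_ne h1.1 (Ne.symm hβne.1), lt_of_le_of_ne h1.2 hβne.2, hβA.1, h2.1⟩
end
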